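/- The number of s-decreasing trees for a weak composition s = (s_1,…,s_n) equals the product over i from 1 to n-1 of (1 + s_{n-i+1} + s_{n-i+2} + ⋯ + s_n). -/

import Mathlib

/-- Rooted plane trees whose internal nodes carry a natural-number label and an ordered
list of children; `leaf` is a leaf. -/
inductive LTree : Type
  | leaf : LTree
  | node : ℕ → List LTree → LTree

namespace LTree

/-- The multiset of labels of the internal nodes of a tree. -/
def labels : LTree → Multiset ℕ
  | leaf => 0
  | node a ts => a ::ₘ (ts.attach.map (fun t => labels t.1)).sum
decreasing_by
  have := List.sizeOf_lt_of_mem t.2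
  simp only [node.sizeOf_spec]
  omega

end LTree

/-- `T` is an `s`-decreasing tree structure: every internal node labeled `a` has exactly
`s a + 1` children, and all labels of internal descendants of `a` are smaller than `a`. -/
inductive IsSDec (s : ℕ → ℕ) : LTree → Prop
  | leaf : IsSDec s .leaf
  | node (a : ℕ) (ts : List LTree) :
      ts.length = s a + 1 →
      (∀ t ∈ ts, IsSDec s t) →
      (∀ t ∈ ts, ∀ b ∈ t.labels, b < a) →
      IsSDec s (.node a ts)

namespace LTree

/-! ### Basic definitions -/

def numLeaves : LTree → ℕ
  | leaf => 1
  | node _ ts => (ts.attach.map (fun t => numLeaves t.1)).sum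
decreasing_by
  have := List.sizeOf_lt_of_mem t.2
  simp only [node.sizeOf_spec]
  omega

theorem labels_leaf : labels leaf = 0 := by rw [labels]

theorem labels_node (a : ℕ) (ts : List LTree) :
    labels (node a ts) = a ::ₘ (ts.map labels).sum := by
  rw [labels]; congr 2; exact List.attach_map_val (l := ts) (f := labels)

theorem numLeaves_leaf : numLeaves leaf = 1 := by rw [numLeaves]

theorem numLeaves_node (a : ℕ) (ts : List LTree) :
    numLeaves (node a ts) = (ts.map numLeaves).sum := by
  rw [numLeaves]; congr 1; exact List.attach_map_val (l := ts) (f := numLeaves)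

mutual
def insertT (u : LTree) : LTree → ℕ → LTree
  | .leaf, p => if p = 0 then u else .leaf
  | .node a ts, p => .node a (insertL u ts p)
def insertL (u : LTree) : List LTree → ℕ → List LTree
  | [], _ => []
  | t :: ts, p => if p < numLeaves t then insertT u t p :: ts else t :: insertL u ts (p - numLeaves t)
end

theorem insertT_leaf (u : LTree) (p : ℕ) : insertT u .leaf p = if p = 0 then u else .leaf := by
  rw [insertT]

theorem insertT_node (u : LTree) (a : ℕ) (ts : List LTree) (p : ℕ) :
    insertT u (.node a ts) p = .node a (insertL u ts p) := by
  rw [insertT]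

theorem insertL_nil (u : LTree) (p : ℕ) : insertL u [] p = [] := by rw [insertL]

theorem insertL_cons (u t : LTree) (ts : List LTree) (p : ℕ) :
    insertL u (t :: ts) p =
      if p < numLeaves t then insertT u t p :: ts else t :: insertL u ts (p - numLeaves t) := by
  rw [insertL]

mutual
def posT (a : ℕ) : LTree → ℕ
  | .leaf => 0
  | .node b ts => if b = a then 0 else posL a ts
def posL (a : ℕ) : List LTree → ℕ
  | [] => 0
  | t :: ts => if a ∈ labels t then posT a t else numLeaves t + posL a ts
end

theorem posT_node (a b : ℕ) (ts : List LTree) :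
    posT a (.node b ts) = if b = a then 0 else posL a ts := by rw [posT]

theorem posL_cons (a : ℕ) (t : LTree) (ts : List LTree) :
    posL a (t :: ts) = if a ∈ labels t then posT a t else numLeaves t + posL a ts := by
  rw [posL]

def del (a : ℕ) : LTree → LTree
  | .leaf => .leaf
  | .node b ts => if b = a then .leaf else .node b (ts.attach.map fun t => del a t.1)
decreasing_by
  have := List.sizeOf_lt_of_mem t.2
  simp only [node.sizeOf_spec]
  omega

theorem del_leaf (a : ℕ) : del a leaf = leaf := by rw [del]

theorem del_node_ne {a b : ℕ} (h : b ≠ a) (ts : List LTree) :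
    del a (node b ts) = node b (ts.map (del a)) := by
  rw [del, if_neg h]; congr 1; exact List.attach_map_val (l := ts) (f := del a)

theorem del_node_eq (a : ℕ) (ts : List LTree) : del a (node a ts) = leaf := by
  rw [del, if_pos rfl]

/-! ### Induction principle -/

theorem myInd (P : LTree → Prop) (h1 : P leaf)
    (h2 : ∀ a ts, (∀ t ∈ ts, P t) → P (node a ts)) : ∀ T, P T := by
  have key : ∀ m, ∀ T : LTree, sizeOf T ≤ m → P T := by
    intro m
    induction m with
    | zero =>
      intro T h
      cases T with
      | leaf => exact h1
      | node a ts => simp at h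
    | succ m ih =>
      intro T h
      cases T with
      | leaf => exact h1
      | node a ts =>
        refine h2 a ts (fun t ht => ih t ?_)
        have := List.sizeOf_lt_of_mem ht
        simp only [node.sizeOf_spec] at h
        omega
  exact fun T => key (sizeOf T) T le_rfl

/-! ### Basic lemmas -/

theorem labels_eq_zero {T : LTree} (h : labels T = 0) : T = leaf := by
  cases T with
  | leaf => rfl
  | node a ts => rw [labels_node] at h; exact absurd h Multiset.cons_ne_zero

theorem mem_sum_labels {b : ℕ} : ∀ us : List LTree,
    (b ∈ ((us.map labels).sum : Multiset ℕ) ↔ ∃ t ∈ us, b ∈ labels t) := by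
  intro us
  induction us with
  | nil => simp
  | cons t us ih => simp [Multiset.mem_add, ih]

theorem numLeaves_formula (s : ℕ → ℕ) : ∀ T, IsSDec s T →
    numLeaves T = 1 + ((labels T).map s).sum := by
  refine myInd _ ?_ ?_
  · intro _; simp [numLeaves_leaf, labels_leaf]
  · intro a ts ih hdec
    cases hdec with
    | node _ _ hlen hsub _ =>
      rw [numLeaves_node, labels_node]
      have key : ∀ us : List LTree, (∀ t ∈ us, IsSDec s t →
          numLeaves t = 1 + ((labels t).map s).sum) → (∀ t ∈ us, IsSDec s t) →
          (us.map numLeaves).sum = us.length + (((us.map labels).sum).map s).sum := by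
        intro us
        induction us with
        | nil => simp
        | cons t us ihl =>
          intro h1 h2
          simp only [List.map_cons, List.sum_cons, List.length_cons]
          rw [h1 t (by simp) (h2 t (by simp)), ihl (fun x hx => h1 x (by simp [hx]))
            (fun x hx => h2 x (by simp [hx])), Multiset.map_add, Multiset.sum_add]
          ring
      rw [key ts ih hsub, hlen]
      simp only [Multiset.map_cons, Multiset.sum_cons]
      ring

/-! ### Insertion: labels -/

theorem labels_insertT (u : LTree) : ∀ T, ∀ p < numLeaves T,
    labels (insertT u T p) = labels u + labels T := by
  refine myInd _ ?_ ?_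
  · intro p hp
    rw [numLeaves_leaf] at hp
    interval_cases p
    simp [insertT_leaf, labels_leaf]
  · intro a ts ih p hp
    rw [numLeaves_node] at hp
    rw [insertT_node, labels_node, labels_node]
    have key : ∀ us : List LTree, (∀ t ∈ us, ∀ p < numLeaves t,
        labels (insertT u t p) = labels u + labels t) →
        ∀ p < (us.map numLeaves).sum,
        (((insertL u us p).map labels).sum : Multiset ℕ) = labels u + (us.map labels).sum := by
      intro us
      induction us with
      | nil => simp
      | cons t us ihl =>
        intro h1 p hp
        rw [insertL_cons]
        by_cases h : p < numLeaves t
        · rw [if_pos h]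
          simp only [List.map_cons, List.sum_cons]
          rw [h1 t (by simp) p h, add_assoc]
        · rw [if_neg h]
          simp only [List.map_cons, List.sum_cons] at hp ⊢
          rw [ihl (fun x hx => h1 x (by simp [hx])) _ (by omega)]
          rw [add_left_comm]
    rw [key ts ih p hp, Multiset.add_cons]

/-! ### Insertion: structure -/

theorem length_insertL (u : LTree) : ∀ us : List LTree, ∀ p,
    (insertL u us p).length = us.length := by
  intro us
  induction us with
  | nil => intro p; rw [insertL_nil]
  | cons t us ih =>
    intro p
    rw [insertL_cons]
    by_cases h : p < numLeaves t
    · rw [if_pos h]; simp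
    · rw [if_neg h]; simp [ih]

theorem isSDec_insertT {s : ℕ → ℕ} {u : LTree} (hu : IsSDec s u) : ∀ T, IsSDec s T →
    (∀ c ∈ labels T, ∀ b ∈ labels u, b < c) → ∀ p,
    IsSDec s (insertT u T p) ∧
      (∀ b ∈ labels (insertT u T p), b ∈ labels u ∨ b ∈ labels T) := by
  refine myInd _ ?_ ?_
  · intro _ _ p
    rw [insertT_leaf]
    by_cases h : p = 0
    · rw [if_pos h]; exact ⟨hu, fun b hb => Or.inl hb⟩
    · rw [if_neg h]; exact ⟨IsSDec.leaf, fun b hb => Or.inr hb⟩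
  · intro a ts ih hdec hcond p
    cases hdec with
    | node _ _ hlen hsub hdesc =>
      rw [insertT_node]
      have key : ∀ us : List LTree, (∀ t ∈ us, IsSDec s t →
            (∀ c ∈ labels t, ∀ b ∈ labels u, b < c) → ∀ q,
            IsSDec s (insertT u t q) ∧
              (∀ b ∈ labels (insertT u t q), b ∈ labels u ∨ b ∈ labels t)) →
          (∀ t ∈ us, IsSDec s t) →
          (∀ t ∈ us, ∀ c ∈ labels t, ∀ b ∈ labels u, b < c) →
          ∀ q, (∀ x ∈ insertL u us q, IsSDec s x) ∧
            (∀ x ∈ insertL u us q, ∀ b ∈ labels x,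
              b ∈ labels u ∨ ∃ t ∈ us, b ∈ labels t) := by
        intro us
        induction us with
        | nil => intro _ _ _ q; rw [insertL_nil]; exact ⟨by simp, by simp⟩
        | cons t us ihl =>
          intro h1 h2 h3 q
          rw [insertL_cons]
          by_cases h : q < numLeaves t
          · rw [if_pos h]
            have ht := h1 t (by simp) (h2 t (by simp)) (h3 t (by simp)) q
            constructor
            · intro x hx
              rcases List.mem_cons.1 hx with hx | hx
              · exact hx ▸ ht.1
              · exact h2 x (by simp [hx])
            · intro x hx b hb
              rcases List.mem_cons.1 hx with hx | hx
              · rcases ht.2 b (hx ▸ hb) with h' | h'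
                · exact Or.inl h'
                · exact Or.inr ⟨t, by simp, h'⟩
              · exact Or.inr ⟨x, by simp [hx], hb⟩
          · rw [if_neg h]
            have hrec := ihl (fun x hx => h1 x (by simp [hx])) (fun x hx => h2 x (by simp [hx]))
              (fun x hx => h3 x (by simp [hx])) (q - numLeaves t)
            constructor
            · intro x hx
              rcases List.mem_cons.1 hx with hx | hx
              · exact hx ▸ h2 t (by simp)
              · exact hrec.1 x hx
            · intro x hx b hb
              rcases List.mem_cons.1 hx with hx | hx
              · exact Or.inr ⟨t, by simp, hx ▸ hb⟩
              · rcases hrec.2 x hx b hb with h' | ⟨t', ht', hb'⟩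
                · exact Or.inl h'
                · exact Or.inr ⟨t', by simp [ht'], hb'⟩
      have hkey := key ts ih hsub (fun t ht c hc => hcond c
        (by rw [labels_node]; exact Multiset.mem_cons_of_mem (mem_sum_labels ts |>.2 ⟨t, ht, hc⟩))) p
      have hamem : (a : ℕ) ∈ labels (node a ts) := by
        rw [labels_node]; exact Multiset.mem_cons_self a _
      constructor
      · refine IsSDec.node a _ (by rw [length_insertL]; exact hlen) hkey.1 ?_
        intro x hx b hb
        rcases hkey.2 x hx b hb with h' | ⟨t', ht', hb'⟩
        · exact hcond a hamem b h'
        · exact hdesc t' ht' b hb'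
      · intro b hb
        rw [labels_node] at hb ⊢
        rcases Multiset.mem_cons.1 hb with hb | hb
        · exact Or.inr (hb ▸ Multiset.mem_cons_self a _)
        · rcases (mem_sum_labels _).1 hb with ⟨x, hx, hbx⟩
          rcases hkey.2 x hx b hbx with h' | ⟨t', ht', hb'⟩
          · exact Or.inl h'
          · exact Or.inr (Multiset.mem_cons_of_mem ((mem_sum_labels ts).2 ⟨t', ht', hb'⟩))

/-! ### Deletion -/

theorem del_eq_self {a : ℕ} : ∀ T, a ∉ labels T → del a T = T := by
  refine myInd _ ?_ ?_
  · intro _; exact del_leaf a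
  · intro b ts ih hmem
    rw [labels_node] at hmem
    have hb : b ≠ a := fun h => hmem (h ▸ Multiset.mem_cons_self b _)
    rw [del_node_ne hb]
    congr 1
    have : ∀ t ∈ ts, del a t = t := fun t ht => ih t ht
      (fun h => hmem (Multiset.mem_cons_of_mem ((mem_sum_labels ts).2 ⟨t, ht, h⟩)))
    calc ts.map (del a) = ts.map id := List.map_congr_left this
    _ = ts := List.map_id ts

theorem delL_id {a : ℕ} (us : List LTree) (h : ∀ t ∈ us, a ∉ labels t) :
    us.map (del a) = us := by
  calc us.map (del a) = us.map id := List.map_congr_left (fun t ht => del_eq_self t (h t ht))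
  _ = us := List.map_id us

theorem mem_labels_del {a : ℕ} : ∀ T, ∀ b ∈ labels (del a T), b ∈ labels T := by
  refine myInd _ ?_ ?_
  · intro b hb; rw [del_leaf] at hb; exact hb
  · intro c ts ih b hb
    by_cases hc : c = a
    · subst hc; rw [del_node_eq, labels_leaf] at hb; exact absurd hb (Multiset.notMem_zero b)
    · rw [del_node_ne hc] at hb
      rw [labels_node] at hb ⊢
      rcases Multiset.mem_cons.1 hb with hb | hb
      · exact hb ▸ Multiset.mem_cons_self c _
      · rcases (mem_sum_labels _).1 hb with ⟨x, hx, hbx⟩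
        rcases List.mem_map.1 hx with ⟨t, ht, rfl⟩
        exact Multiset.mem_cons_of_mem ((mem_sum_labels ts).2 ⟨t, ht, ih t ht b hbx⟩)

theorem del_insertT {a : ℕ} {u : LTree} (hdu : del a u = leaf) :
    ∀ T, a ∉ labels T → ∀ p, del a (insertT u T p) = T := by
  refine myInd _ ?_ ?_
  · intro _ p
    rw [insertT_leaf]
    by_cases h : p = 0
    · rw [if_pos h]; exact hdu
    · rw [if_neg h]; exact del_leaf a
  · intro b ts ih hmem p
    rw [labels_node] at hmem
    have hb : b ≠ a := fun h => hmem (h ▸ Multiset.mem_cons_self b _)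
    have hts : ∀ t ∈ ts, a ∉ labels t := fun t ht h =>
      hmem (Multiset.mem_cons_of_mem ((mem_sum_labels ts).2 ⟨t, ht, h⟩))
    rw [insertT_node, del_node_ne hb]
    congr 1
    have key : ∀ us : List LTree, (∀ t ∈ us, a ∉ labels t → ∀ q, del a (insertT u t q) = t) →
        (∀ t ∈ us, a ∉ labels t) → ∀ q, (insertL u us q).map (del a) = us := by
      intro us
      induction us with
      | nil => intro _ _ q; rw [insertL_nil]; rfl
      | cons t us ihl =>
        intro h1 h2 q
        rw [insertL_cons]
        by_cases h : q < numLeaves t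
        · rw [if_pos h]
          simp only [List.map_cons]
          rw [h1 t (by simp) (h2 t (by simp)) q, delL_id us (fun x hx => h2 x (by simp [hx]))]
        · rw [if_neg h]
          simp only [List.map_cons]
          rw [del_eq_self t (h2 t (by simp)),
            ihl (fun x hx => h1 x (by simp [hx])) (fun x hx => h2 x (by simp [hx]))]
    exact key ts (fun t ht _ q => ih t ht (hts t ht) q) hts p

/-! ### Position of inserted node -/

theorem posT_insertT {a : ℕ} {u : LTree} (hau : a ∈ labels u) (hpu : posT a u = 0) :
    ∀ T, a ∉ labels T → ∀ p < numLeaves T, posT a (insertT u T p) = p := by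
  refine myInd _ ?_ ?_
  · intro _ p hp
    rw [numLeaves_leaf] at hp
    interval_cases p
    rw [insertT_leaf, if_pos rfl]
    exact hpu
  · intro b ts ih hmem p hp
    rw [labels_node] at hmem
    have hb : b ≠ a := fun h => hmem (h ▸ Multiset.mem_cons_self b _)
    have hts : ∀ t ∈ ts, a ∉ labels t := fun t ht h =>
      hmem (Multiset.mem_cons_of_mem ((mem_sum_labels ts).2 ⟨t, ht, h⟩))
    rw [numLeaves_node] at hp
    rw [insertT_node, posT_node, if_neg hb]
    have key : ∀ us : List LTree,
        (∀ t ∈ us, a ∉ labels t → ∀ q < numLeaves t, posT a (insertT u t q) = q) →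
        (∀ t ∈ us, a ∉ labels t) →
        ∀ q < (us.map numLeaves).sum, posL a (insertL u us q) = q := by
      intro us
      induction us with
      | nil => simp
      | cons t us ihl =>
        intro h1 h2 q hq
        rw [insertL_cons]
        simp only [List.map_cons, List.sum_cons] at hq
        by_cases h : q < numLeaves t
        · rw [if_pos h, posL_cons,
            if_pos (by rw [labels_insertT u t q h]; exact Multiset.mem_add.2 (Or.inl hau))]
          exact h1 t (by simp) (h2 t (by simp)) q h
        · rw [if_neg h, posL_cons, if_neg (h2 t (by simp))]
          rw [ihl (fun x hx => h1 x (by simp [hx])) (fun x hx => h2 x (by simp [hx]))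
            _ (by omega)]
          omega
    exact key ts (fun t ht => ih t ht) hts p hp
/-! ### Reconstruction -/

theorem count_sum_labels (a : ℕ) (t : LTree) (us : List LTree) :
    (((t :: us).map labels).sum : Multiset ℕ).count a
      = (labels t).count a + ((us.map labels).sum : Multiset ℕ).count a := by
  simp [Multiset.count_add]

theorem reconstruct {s : ℕ → ℕ} {a : ℕ} :
    ∀ T, IsSDec s T → (∀ b ∈ labels T, a ≤ b) → (labels T).count a ≤ 1 → a ∈ labels T →
    IsSDec s (del a T) ∧ posT a T < numLeaves (del a T) ∧
      insertT (node a (List.replicate (s a + 1) leaf)) (del a T) (posT a T) = T := by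
  refine myInd _ ?_ ?_
  · intro _ _ _ hmem
    rw [labels_leaf] at hmem
    exact absurd hmem (Multiset.notMem_zero a)
  · intro b ts ih hdec hge hcount hmem
    cases hdec with
    | node _ _ hlen hsub hdesc =>
      by_cases hb : b = a
      · subst hb
        have hleaf : ∀ t ∈ ts, t = leaf := by
          intro t ht
          refine labels_eq_zero (Multiset.eq_zero_of_forall_notMem (fun c hc => ?_))
          have h1 := hdesc t ht c hc
          have h2 := hge c (by
            rw [labels_node]
            exact Multiset.mem_cons_of_mem ((mem_sum_labels ts).2 ⟨t, ht, hc⟩))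
          omega
        have hts : ts = List.replicate (s b + 1) leaf := by
          have := List.eq_replicate_of_mem hleaf
          rwa [hlen] at this
        rw [del_node_eq, posT_node, if_pos rfl]
        refine ⟨IsSDec.leaf, by rw [numLeaves_leaf]; omega, ?_⟩
        rw [insertT_leaf, if_pos rfl, hts]
      · have hmem' : a ∈ ((ts.map labels).sum : Multiset ℕ) := by
          rw [labels_node] at hmem
          rcases Multiset.mem_cons.1 hmem with h | h
          · exact absurd h.symm hb
          · exact h
        have hcount' : ((ts.map labels).sum : Multiset ℕ).count a ≤ 1 := by
          rw [labels_node, Multiset.count_cons_of_ne (fun h => hb h.symm)] at hcount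
          exact hcount
        have htsge : ∀ t ∈ ts, ∀ c ∈ labels t, a ≤ c := by
          intro t ht c hc
          refine hge c ?_
          rw [labels_node]
          exact Multiset.mem_cons_of_mem ((mem_sum_labels ts).2 ⟨t, ht, hc⟩)
        have key : ∀ us : List LTree,
            (∀ t ∈ us, IsSDec s t → (∀ c ∈ labels t, a ≤ c) → (labels t).count a ≤ 1 →
              a ∈ labels t →
              IsSDec s (del a t) ∧ posT a t < numLeaves (del a t) ∧
                insertT (node a (List.replicate (s a + 1) leaf)) (del a t) (posT a t) = t) →
            (∀ t ∈ us, IsSDec s t) →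
            (∀ t ∈ us, ∀ c ∈ labels t, a ≤ c) →
            ((us.map labels).sum : Multiset ℕ).count a ≤ 1 →
            a ∈ ((us.map labels).sum : Multiset ℕ) →
            (∀ x ∈ us.map (del a), IsSDec s x) ∧
              posL a us < ((us.map (del a)).map numLeaves).sum ∧
              insertL (node a (List.replicate (s a + 1) leaf)) (us.map (del a)) (posL a us)
                = us := by
          intro us
          induction us with
          | nil => intro _ _ _ _ h; simp at h
          | cons t us ihl =>
            intro h1 h2 h3 h4 h5
            rw [count_sum_labels] at h4
            by_cases hat : a ∈ labels t
            · obtain ⟨d1, d2, d3⟩ := h1 t (by simp) (h2 t (by simp)) (h3 t (by simp))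
                (by omega) hat
              have hnotrest : ∀ x ∈ us, a ∉ labels x := by
                intro x hx hax
                have hc1 : 1 ≤ (labels t).count a := Multiset.one_le_count_iff_mem.2 hat
                have hc2 : 1 ≤ ((us.map labels).sum : Multiset ℕ).count a :=
                  Multiset.one_le_count_iff_mem.2 ((mem_sum_labels us).2 ⟨x, hx, hax⟩)
                omega
              have hrest : us.map (del a) = us := delL_id us hnotrest
              rw [List.map_cons, hrest, posL_cons, if_pos hat]
              refine ⟨?_, ?_, ?_⟩
              · intro x hx
                rcases List.mem_cons.1 hx with hx | hx
                · exact hx ▸ d1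
                · exact h2 x (by simp [hx])
              · simp only [List.map_cons, List.sum_cons]
                omega
              · rw [insertL_cons, if_pos d2, d3]
            · have hd : del a t = t := del_eq_self t hat
              have h5' : a ∈ ((us.map labels).sum : Multiset ℕ) := by
                simp only [List.map_cons, List.sum_cons, Multiset.mem_add] at h5
                rcases h5 with h | h
                · exact absurd h hat
                · exact h
              obtain ⟨e1, e2, e3⟩ := ihl (fun x hx => h1 x (by simp [hx]))
                (fun x hx => h2 x (by simp [hx])) (fun x hx => h3 x (by simp [hx]))
                (by omega) h5'
              rw [List.map_cons, hd, posL_cons, if_neg hat]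
              refine ⟨?_, ?_, ?_⟩
              · intro x hx
                rcases List.mem_cons.1 hx with hx | hx
                · exact hx ▸ h2 t (by simp)
                · exact e1 x hx
              · simp only [List.map_cons, List.sum_cons]
                omega
              · rw [insertL_cons, if_neg (by omega), Nat.add_sub_cancel_left, e3]
        obtain ⟨k1, k2, k3⟩ := key ts (fun t ht => ih t ht) hsub htsge hcount' hmem'
        rw [del_node_ne hb, posT_node, if_neg hb]
        refine ⟨?_, ?_, ?_⟩
        · refine IsSDec.node b _ (by rw [List.length_map]; exact hlen) k1 ?_
          intro x hx c hc
          rcases List.mem_map.1 hx with ⟨t, ht, rfl⟩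
          exact hdesc t ht c (mem_labels_del t c hc)
        · rw [numLeaves_node]
          exact k2
        · rw [insertT_node, k3]
/-! ### The special inserted node -/

theorem labels_uNode (s : ℕ → ℕ) (a : ℕ) :
    labels (node a (List.replicate (s a + 1) leaf)) = a ::ₘ 0 := by
  rw [labels_node, List.map_replicate, labels_leaf, List.sum_replicate, smul_zero]

theorem isSDec_uNode (s : ℕ → ℕ) (a : ℕ) :
    IsSDec s (node a (List.replicate (s a + 1) leaf)) := by
  refine IsSDec.node a _ List.length_replicate ?_ ?_
  · intro t ht
    rw [List.eq_of_mem_replicate ht]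
    exact IsSDec.leaf
  · intro t ht b hb
    rw [List.eq_of_mem_replicate ht, labels_leaf] at hb
    exact absurd hb (Multiset.notMem_zero b)

theorem posT_uNode (s : ℕ → ℕ) (a : ℕ) :
    posT a (node a (List.replicate (s a + 1) leaf)) = 0 := by
  rw [posT_node, if_pos rfl]

end LTree

/-! ### Counting -/

open LTree in
theorem sdec_base (n : ℕ) (s : ℕ → ℕ) (a : ℕ) (h : n + 1 ≤ a) :
    {T : LTree | IsSDec s T ∧ T.labels = (Finset.Icc a n).val}.Finite ∧
      {T : LTree | IsSDec s T ∧ T.labels = (Finset.Icc a n).val}.ncard =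
        ∏ k ∈ Finset.Icc a (n - 1), (1 + ∑ r ∈ Finset.Icc (k + 1) n, s r) := by
  have hempty : (Finset.Icc a n) = ∅ := Finset.Icc_eq_empty (by omega)
  have hset : {T : LTree | IsSDec s T ∧ T.labels = (Finset.Icc a n).val} = {leaf} := by
    ext T
    simp only [Set.mem_setOf_eq, Set.mem_singleton_iff, hempty, Finset.empty_val]
    constructor
    · rintro ⟨_, h2⟩; exact labels_eq_zero h2
    · rintro rfl; exact ⟨IsSDec.leaf, labels_leaf⟩
  rw [hset, Finset.Icc_eq_empty (show ¬a ≤ n - 1 by omega), Finset.prod_empty]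
  exact ⟨Set.finite_singleton _, Set.ncard_singleton _⟩

open LTree in
theorem sdec_key (n : ℕ) (s : ℕ → ℕ) : ∀ d a, 1 ≤ a → n + 1 ≤ a + d →
    {T : LTree | IsSDec s T ∧ T.labels = (Finset.Icc a n).val}.Finite ∧
      {T : LTree | IsSDec s T ∧ T.labels = (Finset.Icc a n).val}.ncard =
        ∏ k ∈ Finset.Icc a (n - 1), (1 + ∑ r ∈ Finset.Icc (k + 1) n, s r) := by
  intro d
  induction d with
  | zero => intro a _ h2; exact sdec_base n s a (by omega)
  | succ d ih =>
    intro a ha1 ha2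
    by_cases hn : n + 1 ≤ a
    · exact sdec_base n s a hn
    · push_neg at hn
      have han : a ≤ n := by omega
      obtain ⟨hfin, hcard⟩ := ih (a + 1) (by omega) (by omega)
      set u : LTree := node a (List.replicate (s a + 1) leaf) with hu
      set L : ℕ := 1 + ∑ r ∈ Finset.Icc (a + 1) n, s r with hL
      set A : Set LTree := {T : LTree | IsSDec s T ∧ T.labels = (Finset.Icc a n).val} with hA
      set B : Set LTree := {T : LTree | IsSDec s T ∧ T.labels = (Finset.Icc (a + 1) n).val}
        with hB
      have hlabu : labels u = a ::ₘ 0 := labels_uNode s a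
      have hicc : (Finset.Icc a n).val = a ::ₘ (Finset.Icc (a + 1) n).val := by
        have hs : Finset.Icc (a + 1) n = Finset.Ioc a n := by
          ext x
          simp only [Finset.mem_Icc, Finset.mem_Ioc]
          omega
        rw [hs, ← Finset.Ioc_insert_left han, Finset.insert_val_of_notMem (by simp)]
      have hanotin : a ∉ (Finset.Icc (a + 1) n).val := by
        intro h
        have := Finset.mem_Icc.1 (Finset.mem_def.2 h)
        omega
      have hnumB : ∀ T' ∈ B, numLeaves T' = L := by
        rintro T' ⟨h1, h2⟩
        rw [numLeaves_formula s T' h1, h2, hL]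
        rfl
      have hBij : Set.BijOn (fun x : LTree × ℕ => insertT u x.1 x.2)
          (B ×ˢ Set.Iio L) A := by
        refine ⟨?_, ?_, ?_⟩
        · rintro ⟨T', p⟩ ⟨hT', hp⟩
          simp only [Set.mem_prod, Set.mem_Iio] at hp
          obtain ⟨h1, h2⟩ := hT'
          have hpn : p < numLeaves T' := by rw [hnumB T' ⟨h1, h2⟩]; exact hp
          have hcond : ∀ c ∈ labels T', ∀ b ∈ labels u, b < c := by
            intro c hc b hb
            rw [hlabu] at hb
            rcases Multiset.mem_cons.1 hb with rfl | hb
            · rw [h2] at hc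
              have := Finset.mem_Icc.1 (Finset.mem_def.2 hc)
              omega
            · exact absurd hb (Multiset.notMem_zero b)
          refine ⟨(isSDec_insertT (isSDec_uNode s a) T' h1 hcond p).1, ?_⟩
          rw [labels_insertT u T' p hpn, hlabu, h2, hicc, Multiset.cons_add, zero_add]
        · rintro ⟨T1, p1⟩ ⟨hT1, hp1⟩ ⟨T2, p2⟩ ⟨hT2, hp2⟩ heq
          simp only at heq
          have hnot1 : a ∉ labels T1 := by rw [hT1.2]; exact hanotin
          have hnot2 : a ∉ labels T2 := by rw [hT2.2]; exact hanotin
          have hdu : del a u = leaf := del_node_eq a _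
          have hT : T1 = T2 := by
            have e1 := del_insertT hdu T1 hnot1 p1
            have e2 := del_insertT hdu T2 hnot2 p2
            rw [← e1, ← e2, heq]
          have hamem : a ∈ labels u := by rw [hlabu]; exact Multiset.mem_cons_self a 0
          have hp : p1 = p2 := by
            have e1 := posT_insertT hamem (posT_uNode s a) T1 hnot1 p1
              (by rw [hnumB T1 hT1]; exact hp1)
            have e2 := posT_insertT hamem (posT_uNode s a) T2 hnot2 p2
              (by rw [hnumB T2 hT2]; exact hp2)
            rw [← e1, ← e2, heq]
          exact Prod.ext hT hp
        · rintro T ⟨hTdec, hTlab⟩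
          have hge : ∀ b ∈ labels T, a ≤ b := by
            intro b hb
            rw [hTlab] at hb
            exact (Finset.mem_Icc.1 hb).1
          have hcount : (labels T).count a ≤ 1 := by
            rw [hTlab]
            exact Multiset.nodup_iff_count_le_one.1 (Finset.Icc a n).nodup a
          have hamem : a ∈ labels T := by
            rw [hTlab]
            exact Finset.mem_Icc.2 ⟨le_refl a, han⟩
          obtain ⟨r1, r2, r3⟩ := reconstruct T hTdec hge hcount hamem
          have hlab' : labels (del a T) = (Finset.Icc (a + 1) n).val := by
            have := labels_insertT u (del a T) (posT a T) r2
            rw [r3, hlabu, Multiset.cons_add, zero_add] at this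
            rw [hTlab, hicc] at this
            exact (Multiset.cons_inj_right a).1 this.symm
          have hmemB : del a T ∈ B := ⟨r1, hlab'⟩
          refine ⟨(del a T, posT a T), ⟨hmemB, ?_⟩, r3⟩
          simp only [Set.mem_Iio]
          rw [← hnumB _ hmemB]
          exact r2
      have hfinprod : (B ×ˢ Set.Iio L).Finite := hfin.prod (Set.finite_Iio L)
      have hAfin : A.Finite := by
        rw [← hBij.image_eq]
        exact hfinprod.image _
      have hprodcard : (B ×ˢ Set.Iio L).ncard = B.ncard * L := by
        rw [← Nat.card_coe_set_eq, Nat.card_congr (Equiv.Set.prod B (Set.Iio L)),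
          Nat.card_prod, Nat.card_coe_set_eq, Nat.card_coe_set_eq]
        congr 1
        rw [← Finset.coe_Iio, Set.ncard_coe_finset, Nat.card_Iio]
      have hAcard : A.ncard = B.ncard * L := by
        rw [← hBij.image_eq, Set.ncard_image_of_injOn hBij.injOn, hprodcard]
      refine ⟨hAfin, ?_⟩
      rw [hAcard, hcard]
      by_cases hcase : a ≤ n - 1
      · have hs : Finset.Icc a (n - 1) = insert a (Finset.Icc (a + 1) (n - 1)) := by
          ext x
          simp only [Finset.mem_Icc, Finset.mem_insert]
          omega
        rw [hs, Finset.prod_insert (by simp), hL]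
        ring
      · have h1 : Finset.Icc a (n - 1) = ∅ := Finset.Icc_eq_empty (by omega)
        have h2 : Finset.Icc (a + 1) (n - 1) = ∅ := Finset.Icc_eq_empty (by omega)
        have h3 : Finset.Icc (a + 1) n = ∅ := Finset.Icc_eq_empty (by omega)
        rw [hL, h1, h2, h3]
        simp


/-- The number of `s`-decreasing trees (internal nodes labeled bijectively by `[n]`,
node `i` having `s i + 1` children, descendants having smaller labels) equals
`∏_{i=1}^{n-1} (1 + s_{n-i+1} + s_{n-i+2} + ⋯ + s_n)`. -/
theorem card_s_decreasing_trees (n : ℕ) (s : ℕ → ℕ) :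
    {T : LTree | IsSDec s T ∧ T.labels = (Finset.Icc 1 n).val}.ncard =
      ∏ i ∈ Finset.Icc 1 (n - 1), (1 + ∑ r ∈ Finset.Icc (n - i + 1) n, s r) := by
  obtain ⟨-, hcard⟩ := sdec_key n s n 1 le_rfl (by omega)
  rw [hcard]
  refine Finset.prod_nbij' (fun k => n - k) (fun i => n - i) ?_ ?_ ?_ ?_ ?_
  · intro k hk
    simp only [Finset.mem_Icc] at hk ⊢
    obtain ⟨h1, h2⟩ := hk
    refine ⟨?_, ?_⟩ <;> omega
  · intro i hi
    simp only [Finset.mem_Icc] at hi ⊢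
    omega
  · intro k hk
    simp only [Finset.mem_Icc] at hk
    show n - (n - k) = k
    omega
  · intro i hi
    simp only [Finset.mem_Icc] at hi
    show n - (n - i) = i
    omega
  · intro k hk
    simp only [Finset.mem_Icc] at hk
    show _ = 1 + ∑ r ∈ Finset.Icc (n - (n - k) + 1) n, s r
    have h : n - (n - k) = k := by omega
    rw [h]
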